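/- Completeness of the optimized translation relative to the simple one: for any canonical LF context Γ and canonical LF type A (not necessarily well-formed), if the sequent Σ; ⟦Γ⟧ ⟶ ⟦A⟧ M is derivable in hohh, then Σ; ⦇Γ⦈ ⟶ ⦃A⦄ M is derivable, where the optimized derivation is obtained by replacing each subderivation for an elided rigid-variable typing premise by the axiom ⊤R. -/

import Mathlib

namespace LFHH

/-! ## Simple types and hohh terms -/

inductive STy : Type
  | lfobj | lftype | o
  | arrow (a b : STy)
deriving DecidableEq

/-- hohh terms: de Bruijn bound variables, named constants. -/
inductive HTerm : Type
  | bvar (n : ℕ)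
  | con (c : ℕ)
  | lam (τ : STy) (t : HTerm)
  | app (t u : HTerm)
deriving DecidableEq

def hshift (d c : ℕ) : HTerm → HTerm
  | .bvar n => if n < c then .bvar n else .bvar (n + d)
  | .con k => .con k
  | .lam τ t => .lam τ (hshift d (c+1) t)
  | .app t u => .app (hshift d c t) (hshift d c u)

/-- substitute `s` for de Bruijn index `k` (standard, with lowering). -/
def hsubst (k : ℕ) (s : HTerm) : HTerm → HTerm
  | .bvar n => if n = k then hshift k 0 s else if k < n then .bvar (n-1) else .bvar n
  | .con c => .con c
  | .lam τ t => .lam τ (hsubst (k+1) s t)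
  | .app t u => .app (hsubst k s t) (hsubst k s u)

/-- substitute `s` for the constant `c`. -/
def hsubstCon (c : ℕ) (s : HTerm) : HTerm → HTerm
  | .bvar n => .bvar n
  | .con k => if k = c then s else .con k
  | .lam τ t => .lam τ (hsubstCon c s t)
  | .app t u => .app (hsubstCon c s t) (hsubstCon c s u)

/-- simultaneous substitution of terms for constants. -/
def hsubstSim (σ : ℕ → Option HTerm) : HTerm → HTerm
  | .bvar n => .bvar n
  | .con k => (σ k).getD (.con k)
  | .lam τ t => .lam τ (hsubstSim σ t)
  | .app t u => .app (hsubstSim σ t) (hsubstSim σ u)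

/-- constants occurring in a term. -/
def hcons : HTerm → List ℕ
  | .bvar _ => []
  | .con c => [c]
  | .lam _ t => hcons t
  | .app t u => hcons t ++ hcons u

/-- beta reduction step. -/
inductive HStepB : HTerm → HTerm → Prop
  | beta (τ : STy) (t u : HTerm) : HStepB (.app (.lam τ t) u) (hsubst 0 u t)
  | lam (τ : STy) {t t'} : HStepB t t' → HStepB (.lam τ t) (.lam τ t')
  | appl {t t'} (u) : HStepB t t' → HStepB (.app t u) (.app t' u)
  | appr (t) {u u'} : HStepB u u' → HStepB (.app t u) (.app t u')

/-- beta or eta reduction step. -/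
inductive HStep : HTerm → HTerm → Prop
  | beta (τ : STy) (t u : HTerm) : HStep (.app (.lam τ t) u) (hsubst 0 u t)
  | eta (τ : STy) (t : HTerm) : HStep (.lam τ (.app (hshift 1 0 t) (.bvar 0))) t
  | lam (τ : STy) {t t'} : HStep t t' → HStep (.lam τ t) (.lam τ t')
  | appl {t t'} (u) : HStep t t' → HStep (.app t u) (.app t' u)
  | appr (t) {u u'} : HStep t u' → HStep (.app t u) (.app t u')

def HNormal (t : HTerm) : Prop := ∀ u, ¬ HStep t u
def HNormalB (t : HTerm) : Prop := ∀ u, ¬ HStepB t u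

/-- `t` beta-normalizes to `t'`. -/
def HBNF (t t' : HTerm) : Prop := Relation.ReflTransGen HStepB t t' ∧ HNormalB t'

/-! ## hohh formulas -/

inductive HForm : Type
  | top
  | hastype (m a : HTerm)
  | papp (u : ℕ) (args : List HTerm)
  | imp (f g : HForm)
  | all (τ : STy) (f : HForm)
deriving DecidableEq

def substF (k : ℕ) (s : HTerm) : HForm → HForm
  | .top => .top
  | .hastype m a => .hastype (hsubst k s m) (hsubst k s a)
  | .papp u args => .papp u (args.map (hsubst k s))
  | .imp f g => .imp (substF k s f) (substF k s g)
  | .all τ f => .all τ (substF (k+1) s f)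

def closeT (k x : ℕ) : HTerm → HTerm
  | .bvar n => .bvar n
  | .con c => if c = x then .bvar k else .con c
  | .lam τ t => .lam τ (closeT (k+1) x t)
  | .app t u => .app (closeT k x t) (closeT k x u)

def closeF (k x : ℕ) : HForm → HForm
  | .top => .top
  | .hastype m a => .hastype (closeT k x m) (closeT k x a)
  | .papp u args => .papp u (args.map (closeT k x))
  | .imp f g => .imp (closeF k x f) (closeF k x g)
  | .all τ f => .all τ (closeF (k+1) x f)

def IsAtom : HForm → Prop
  | .hastype _ _ => True
  | .papp _ _ => True
  | _ => False

mutual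
  def IsG : HForm → Prop
    | .top => True
    | .hastype _ _ => True
    | .papp _ _ => True
    | .imp d g => IsD d ∧ IsG g
    | .all _ g => IsG g
  def IsD : HForm → Prop
    | .top => False
    | .hastype _ _ => True
    | .papp _ _ => True
    | .imp g d => IsG g ∧ IsD d
    | .all _ d => IsD d
end

/-! ## hohh typing and sequent calculus -/

abbrev Sig := List (ℕ × STy)

def sigNames (Sg : Sig) : List ℕ := Sg.map Prod.fst

inductive HWt : Sig → List STy → HTerm → STy → Prop
  | bvar {Sg env n τ} : env[n]? = some τ → HWt Sg env (.bvar n) τ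
  | con {Sg env c τ} : (c, τ) ∈ Sg → HWt Sg env (.con c) τ
  | lam {Sg env τ σ t} : HWt Sg (τ :: env) t σ → HWt Sg env (.lam τ t) (.arrow τ σ)
  | app {Sg env τ σ t u} : HWt Sg env t (.arrow τ σ) → HWt Sg env u τ →
      HWt Sg env (.app t u) σ

/-! Height-indexed sequent calculus for the hohh fragment. -/
mutual
  inductive Seq : ℕ → Sig → List HForm → HForm → Prop
    | top {n Sg Γ} : Seq n Sg Γ .top
    | impR {n Sg Γ d g} : Seq n Sg (d :: Γ) g → Seq (n+1) Sg Γ (.imp d g)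
    | allR {n Sg Γ τ g} (c : ℕ) : c ∉ sigNames Sg →
        Seq n ((c, τ) :: Sg) Γ (substF 0 (.con c) g) → Seq (n+1) Sg Γ (.all τ g)
    | decide {n Sg Γ a d} : d ∈ Γ → IsAtom a → Focus n Sg Γ a d → Seq (n+1) Sg Γ a
  inductive Focus : ℕ → Sig → List HForm → HForm → HForm → Prop
    | init {n Sg Γ a} : IsAtom a → Focus n Sg Γ a a
    | allL {n Sg Γ a τ d} (t : HTerm) : HWt Sg [] t τ →
        Focus n Sg Γ a (substF 0 t d) → Focus (n+1) Sg Γ a (.all τ d)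
    | impL {n Sg Γ a g d} : Seq n Sg Γ g → Focus n Sg Γ a d →
        Focus (n+1) Sg Γ a (.imp g d)
end

/-- derivability (some height). -/
def SeqD (Sg : Sig) (Γ : List HForm) (g : HForm) : Prop := ∃ n, Seq n Sg Γ g

/-- clause ∀x1.(F1 ⊃ ... ∀xn.(Fn ⊃ A')...). -/
def mkClause : List (STy × HForm) → HForm → HForm
  | [], a => a
  | (τ, f) :: L, a => .all τ (.imp f (mkClause L a))

/-- peel a clause along a list of instantiating terms, returning
the instantiated bodies and head. -/
def peel : List HTerm → HForm → Option (List HForm × HForm)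
  | [], f => some ([], f)
  | t :: ts, .all _ (.imp g d) =>
      (peel ts (substF 0 t d)).map (fun p => ((substF 0 t g) :: p.1, p.2))
  | _ :: _, _ => none

/-! ## LF syntax -/

mutual
  inductive LFKind : Type
    | type
    | pi (A : LFType) (K : LFKind)
  inductive LFType : Type
    | tvar (u : ℕ)
    | pi (A : LFType) (B : LFType)
    | lam (A : LFType) (B : LFType)
    | app (A : LFType) (M : LFObj)
  inductive LFObj : Type
    | bvar (n : ℕ)
    | fvar (x : ℕ)
    | lam (A : LFType) (M : LFObj)
    | app (M N : LFObj)
end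

/-! open: instantiate bound variable `k` with object `N` (locally nameless style). -/
mutual
  def openK (k : ℕ) (N : LFObj) : LFKind → LFKind
    | .type => .type
    | .pi A K => .pi (openT k N A) (openK (k+1) N K)
  def openT (k : ℕ) (N : LFObj) : LFType → LFType
    | .tvar u => .tvar u
    | .pi A B => .pi (openT k N A) (openT (k+1) N B)
    | .lam A B => .lam (openT k N A) (openT (k+1) N B)
    | .app A M => .app (openT k N A) (openO k N M)
  def openO (k : ℕ) (N : LFObj) : LFObj → LFObj
    | .bvar n => if n = k then N else .bvar n
    | .fvar x => .fvar x
    | .lam A M => .lam (openT k N A) (openO (k+1) N M)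
    | .app M M' => .app (openO k N M) (openO k N M')
end

/-! substitute object `N` for the free (named) variable `x`. -/
mutual
  def substK (x : ℕ) (N : LFObj) : LFKind → LFKind
    | .type => .type
    | .pi A K => .pi (substT x N A) (substK x N K)
  def substT (x : ℕ) (N : LFObj) : LFType → LFType
    | .tvar u => .tvar u
    | .pi A B => .pi (substT x N A) (substT x N B)
    | .lam A B => .lam (substT x N A) (substT x N B)
    | .app A M => .app (substT x N A) (substO x N M)
  def substO (x : ℕ) (N : LFObj) : LFObj → LFObj
    | .bvar n => .bvar n
    | .fvar y => if y = x then N else .fvar y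
    | .lam A M => .lam (substT x N A) (substO x N M)
    | .app M M' => .app (substO x N M) (substO x N M')
end

/-! simultaneous substitution of objects for free variables. -/
mutual
  def substSimK (σ : ℕ → Option LFObj) : LFKind → LFKind
    | .type => .type
    | .pi A K => .pi (substSimT σ A) (substSimK σ K)
  def substSimT (σ : ℕ → Option LFObj) : LFType → LFType
    | .tvar u => .tvar u
    | .pi A B => .pi (substSimT σ A) (substSimT σ B)
    | .lam A B => .lam (substSimT σ A) (substSimT σ B)
    | .app A M => .app (substSimT σ A) (substSimO σ M)
  def substSimO (σ : ℕ → Option LFObj) : LFObj → LFObj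
    | .bvar n => .bvar n
    | .fvar y => (σ y).getD (.fvar y)
    | .lam A M => .lam (substSimT σ A) (substSimO σ M)
    | .app M M' => .app (substSimO σ M) (substSimO σ M')
end

/-! rename free variable `x` (object-level and type-level) to `y`. -/
mutual
  def renameK (x y : ℕ) : LFKind → LFKind
    | .type => .type
    | .pi A K => .pi (renameT x y A) (renameK x y K)
  def renameT (x y : ℕ) : LFType → LFType
    | .tvar u => .tvar (if u = x then y else u)
    | .pi A B => .pi (renameT x y A) (renameT x y B)
    | .lam A B => .lam (renameT x y A) (renameT x y B)
    | .app A M => .app (renameT x y A) (renameO x y M)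
  def renameO (x y : ℕ) : LFObj → LFObj
    | .bvar n => .bvar n
    | .fvar z => .fvar (if z = x then y else z)
    | .lam A M => .lam (renameT x y A) (renameO x y M)
    | .app M M' => .app (renameO x y M) (renameO x y M')
end

/-! free names occurring in LF expressions (both object- and type-level names). -/
mutual
  def namesK : LFKind → List ℕ
    | .type => []
    | .pi A K => namesT A ++ namesK K
  def namesT : LFType → List ℕ
    | .tvar u => [u]
    | .pi A B => namesT A ++ namesT B
    | .lam A B => namesT A ++ namesT B
    | .app A M => namesT A ++ namesO M
  def namesO : LFObj → List ℕ
    | .bvar _ => []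
    | .fvar x => [x]
    | .lam A M => namesT A ++ namesO M
    | .app M M' => namesO M ++ namesO M'
end

/-! local closedness: all bound-variable indices below `k`. -/
mutual
  def closedK (k : ℕ) : LFKind → Prop
    | .type => True
    | .pi A K => closedT k A ∧ closedK (k+1) K
  def closedT (k : ℕ) : LFType → Prop
    | .tvar _ => True
    | .pi A B => closedT k A ∧ closedT (k+1) B
    | .lam A B => closedT k A ∧ closedT (k+1) B
    | .app A M => closedT k A ∧ closedO k M
  def closedO (k : ℕ) : LFObj → Prop
    | .bvar n => n < k
    | .fvar _ => True
    | .lam A M => closedT k A ∧ closedO (k+1) M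
    | .app M M' => closedO k M ∧ closedO k M'
end

def LC (M : LFObj) : Prop := closedO 0 M

/-! ## LF beta reduction and normal forms -/

mutual
  inductive StepK : LFKind → LFKind → Prop
    | pi1 {A A' K} : StepT A A' → StepK (.pi A K) (.pi A' K)
    | pi2 {A K K'} : StepK K K' → StepK (.pi A K) (.pi A K')
  inductive StepT : LFType → LFType → Prop
    | beta {A B N} : StepT (.app (.lam A B) N) (openT 0 N B)
    | pi1 {A A' B} : StepT A A' → StepT (.pi A B) (.pi A' B)
    | pi2 {A B B'} : StepT B B' → StepT (.pi A B) (.pi A B')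
    | lam1 {A A' B} : StepT A A' → StepT (.lam A B) (.lam A' B)
    | lam2 {A B B'} : StepT B B' → StepT (.lam A B) (.lam A B')
    | app1 {A A' M} : StepT A A' → StepT (.app A M) (.app A' M)
    | app2 {A M M'} : StepO M M' → StepT (.app A M) (.app A M')
  inductive StepO : LFObj → LFObj → Prop
    | beta {A M N} : StepO (.app (.lam A M) N) (openO 0 N M)
    | lam1 {A A' M} : StepT A A' → StepO (.lam A M) (.lam A' M)
    | lam2 {A M M'} : StepO M M' → StepO (.lam A M) (.lam A M')
    | app1 {M M' N} : StepO M M' → StepO (.app M N) (.app M' N)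
    | app2 {M N N'} : StepO N N' → StepO (.app M N) (.app M N')
end

def NormK (K : LFKind) : Prop := ∀ K', ¬ StepK K K'
def NormT (A : LFType) : Prop := ∀ A', ¬ StepT A A'
def NormO (M : LFObj) : Prop := ∀ M', ¬ StepO M M'

/-- beta-normalization relations. -/
def KNF (K K' : LFKind) : Prop := Relation.ReflTransGen StepK K K' ∧ NormK K'
def TNF (A A' : LFType) : Prop := Relation.ReflTransGen StepT A A' ∧ NormT A'
def ONF (M M' : LFObj) : Prop := Relation.ReflTransGen StepO M M' ∧ NormO M'

/-! ## LF contexts, judgments, typing -/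

inductive EVal : Type
  | kind (K : LFKind)
  | type (A : LFType)

abbrev Ctx := List (ℕ × EVal)

def ctxNames (Γ : Ctx) : List ℕ := Γ.map Prod.fst

def EVNF : EVal → EVal → Prop
  | .kind K, .kind K' => KNF K K'
  | .type A, .type A' => TNF A A'
  | _, _ => False

def CtxNF (Γ Γ' : Ctx) : Prop :=
  List.Forall₂ (fun p q => p.1 = q.1 ∧ EVNF p.2 q.2) Γ Γ'

def substEV (x : ℕ) (N : LFObj) : EVal → EVal
  | .kind K => .kind (substK x N K)
  | .type A => .type (substT x N A)

def substCtx (x : ℕ) (N : LFObj) (Γ : Ctx) : Ctx :=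
  Γ.map (fun p => (p.1, substEV x N p.2))

def renameEV (x y : ℕ) : EVal → EVal
  | .kind K => .kind (renameK x y K)
  | .type A => .type (renameT x y A)

def renameCtx (x y : ℕ) (Γ : Ctx) : Ctx :=
  Γ.map (fun p => (p.1, renameEV x y p.2))

/-- LF judgments (other than context well-formedness). -/
inductive LFJudg : Type
  | kind (K : LFKind)
  | istype (A : LFType) (K : LFKind)
  | isobj (M : LFObj) (A : LFType)

def substJudg (x : ℕ) (N : LFObj) : LFJudg → LFJudg
  | .kind K => .kind (substK x N K)
  | .istype A K => .istype (substT x N A) (substK x N K)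
  | .isobj M A => .isobj (substO x N M) (substT x N A)

def renameJudg (x y : ℕ) : LFJudg → LFJudg
  | .kind K => .kind (renameK x y K)
  | .istype A K => .istype (renameT x y A) (renameK x y K)
  | .isobj M A => .isobj (renameO x y M) (renameT x y A)

def namesJudg : LFJudg → List ℕ
  | .kind K => namesK K
  | .istype A K => namesT A ++ namesK K
  | .isobj M A => namesO M ++ namesT A

def JudgNF : LFJudg → LFJudg → Prop
  | .kind K, .kind K' => KNF K K'
  | .istype A K, .istype A' K' => TNF A A' ∧ KNF K K'
  | .isobj M A, .isobj M' A' => ONF M M' ∧ TNF A A'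
  | _, _ => False

/-! The LF typing rules (Figure 2), in locally nameless style. -/
mutual
  inductive WfCtx : Ctx → Prop
    | nil : WfCtx []
    | kind {Γ K u} : WfKind Γ K → WfCtx Γ → u ∉ ctxNames Γ →
        WfCtx ((u, .kind K) :: Γ)
    | type {Γ A x} : WfType Γ A .type → WfCtx Γ → x ∉ ctxNames Γ →
        WfCtx ((x, .type A) :: Γ)
  inductive WfKind : Ctx → LFKind → Prop
    | type {Γ} : WfCtx Γ → WfKind Γ .type
    | pi {Γ A K} (x : ℕ) : WfType Γ A .type →
        x ∉ ctxNames Γ → x ∉ namesK K →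
        WfKind ((x, .type A) :: Γ) (openK 0 (.fvar x) K) →
        WfKind Γ (.pi A K)
  inductive WfType : Ctx → LFType → LFKind → Prop
    | var {Γ u K K'} : WfCtx Γ → (u, .kind K) ∈ Γ → KNF K K' →
        WfType Γ (.tvar u) K'
    | pi {Γ A B} (x : ℕ) : WfType Γ A .type →
        x ∉ ctxNames Γ → x ∉ namesT B →
        WfType ((x, .type A) :: Γ) (openT 0 (.fvar x) B) .type →
        WfType Γ (.pi A B) .type
    | lam {Γ A A' B K} (x : ℕ) : WfType Γ A .type →
        x ∉ ctxNames Γ → x ∉ namesT B → x ∉ namesK K →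
        WfType ((x, .type A) :: Γ) (openT 0 (.fvar x) B) (openK 0 (.fvar x) K) →
        TNF A A' →
        WfType Γ (.lam A B) (.pi A' K)
    | app {Γ A B K K' M} : WfType Γ A (.pi B K) → WfObj Γ M B →
        KNF (openK 0 M K) K' → WfType Γ (.app A M) K'
  inductive WfObj : Ctx → LFObj → LFType → Prop
    | var {Γ x A A'} : WfCtx Γ → (x, .type A) ∈ Γ → TNF A A' →
        WfObj Γ (.fvar x) A'
    | lam {Γ A A' B M} (x : ℕ) : WfType Γ A .type →
        x ∉ ctxNames Γ → x ∉ namesO M → x ∉ namesT B →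
        WfObj ((x, .type A) :: Γ) (openO 0 (.fvar x) M) (openT 0 (.fvar x) B) →
        TNF A A' →
        WfObj Γ (.lam A M) (.pi A' B)
    | app {Γ M N A B B'} : WfObj Γ M (.pi A B) → WfObj Γ N A →
        TNF (openT 0 N B) B' → WfObj Γ (.app M N) B'
end

def WfJudg (Γ : Ctx) : LFJudg → Prop
  | .kind K => WfKind Γ K
  | .istype A K => WfType Γ A K
  | .isobj M A => WfObj Γ M A

/-! ## Canonical forms -/

/-! Canonical (beta-normal, eta-long / fully applied) forms of LF,
presented as the standard canonical-forms type system. -/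
mutual
  inductive CanK : Ctx → LFKind → Prop
    | type {Γ} : CanK Γ .type
    | pi {Γ A K} (x : ℕ) : CanT Γ A .type →
        x ∉ ctxNames Γ → x ∉ namesK K →
        CanK ((x, .type A) :: Γ) (openK 0 (.fvar x) K) →
        CanK Γ (.pi A K)
  inductive CanT : Ctx → LFType → LFKind → Prop
    | atom {Γ A} : AtT Γ A .type → CanT Γ A .type
    | pi {Γ A B} (x : ℕ) : CanT Γ A .type →
        x ∉ ctxNames Γ → x ∉ namesT B →
        CanT ((x, .type A) :: Γ) (openT 0 (.fvar x) B) .type →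
        CanT Γ (.pi A B) .type
    | lam {Γ A B K} (x : ℕ) : CanT Γ A .type →
        x ∉ ctxNames Γ → x ∉ namesT B → x ∉ namesK K →
        CanT ((x, .type A) :: Γ) (openT 0 (.fvar x) B) (openK 0 (.fvar x) K) →
        CanT Γ (.lam A B) (.pi A K)
  inductive AtT : Ctx → LFType → LFKind → Prop
    | var {Γ u K} : (u, .kind K) ∈ Γ → AtT Γ (.tvar u) K
    | app {Γ A B K K' M} : AtT Γ A (.pi B K) → CanO Γ M B →
        KNF (openK 0 M K) K' → AtT Γ (.app A M) K'
  inductive CanO : Ctx → LFObj → LFType → Prop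
    | atom {Γ M A} : AtO Γ M A → AtT Γ A .type → CanO Γ M A
    | lam {Γ A B M} (x : ℕ) : CanT Γ A .type →
        x ∉ ctxNames Γ → x ∉ namesO M → x ∉ namesT B →
        CanO ((x, .type A) :: Γ) (openO 0 (.fvar x) M) (openT 0 (.fvar x) B) →
        CanO Γ (.lam A M) (.pi A B)
  inductive AtO : Ctx → LFObj → LFType → Prop
    | var {Γ x A} : (x, .type A) ∈ Γ → AtO Γ (.fvar x) A
    | app {Γ M N A B B'} : AtO Γ M (.pi A B) → CanO Γ N A →
        TNF (openT 0 N B) B' → AtO Γ (.app M N) B'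
end

inductive CanCtx : Ctx → Prop
  | nil : CanCtx []
  | kind {Γ K u} : CanK Γ K → CanCtx Γ → u ∉ ctxNames Γ →
      CanCtx ((u, .kind K) :: Γ)
  | type {Γ A x} : CanT Γ A .type → CanCtx Γ → x ∉ ctxNames Γ →
      CanCtx ((x, .type A) :: Γ)

def CanEV (Γ : Ctx) : EVal → Prop
  | .kind K => CanK Γ K
  | .type A => CanT Γ A .type

def CanJudg (Γ : Ctx) : LFJudg → Prop
  | .kind K => CanK Γ K
  | .istype A K => CanT Γ A K
  | .isobj M A => CanO Γ M A

/-! ## Encoding of LF into hohh -/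

/-- simple type assigned to the encoding of an object of a given LF type. -/
def phiT : LFType → STy
  | .pi A B => .arrow (phiT A) (phiT B)
  | _ => .lfobj

def phiK : LFKind → STy
  | .type => .lftype
  | .pi A K => .arrow (phiT A) (phiK K)

/-! type-erasing encoding of LF objects and (base) types into hohh terms. -/
mutual
  def encO : LFObj → HTerm
    | .bvar n => .bvar n
    | .fvar x => .con x
    | .lam A M => .lam (phiT A) (encO M)
    | .app M N => .app (encO M) (encO N)
  def encT : LFType → HTerm
    | .tvar u => .con u
    | .app A M => .app (encT A) (encO M)
    | .pi _ _ => .con 0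
    | .lam _ _ => .con 0
end

def IsBaseT : LFType → Prop
  | .tvar _ => True
  | .app A _ => IsBaseT A
  | _ => False

/-- head type-family constant of a base type. -/
def headT : LFType → ℕ
  | .tvar u => u
  | .app A _ => headT A
  | _ => 0

/-- encoded argument list of a base type. -/
def argsT : LFType → List HTerm
  | .app A M => argsT A ++ [encO M]
  | _ => []

/-- signature of constants corresponding to an LF context. -/
def sigOf (Γ : Ctx) : Sig :=
  Γ.map (fun p => (p.1, match p.2 with | .kind K => phiK K | .type A => phiT A))

/-! ## The simple translation -/

/-- ⟦A⟧ M = F : the simple translation of an LF type applied to an hohh term. -/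
inductive SimpleT : LFType → HTerm → HForm → Prop
  | base {A M} : IsBaseT A → SimpleT A M (.hastype M (encT A))
  | pi {A B M FA FB} (x : ℕ) :
      x ∉ namesT A → x ∉ namesT B → x ∉ hcons M →
      SimpleT A (.con x) FA →
      SimpleT (openT 0 (.fvar x) B) (.app M (.con x)) FB →
      SimpleT (.pi A B) M (.all (phiT A) (closeF 0 x (.imp FA FB)))

/-- translation of an LF context (specification) into a logic program;
kind assignments are dropped. -/
inductive SimpleCtx : Ctx → List HForm → Prop
  | nil : SimpleCtx [] []
  | kind {Γ Ds u K} : SimpleCtx Γ Ds → SimpleCtx ((u, .kind K) :: Γ) Ds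
  | type {Γ Ds x A F} : SimpleT A (.con x) F → SimpleCtx Γ Ds →
      SimpleCtx ((x, .type A) :: Γ) (F :: Ds)

/-! ## Rigid occurrences -/

/-- LF-level argument list of a base type. -/
def argsLF : LFType → List LFObj
  | .app A M => argsLF A ++ [M]
  | _ => []

mutual
  /-- Γ⃗; δ; x ⊢o M : x occurs rigidly in the object M. -/
  inductive RigidO : List ℕ → List ℕ → ℕ → LFObj → Prop
    | init {gs δ x} (ys : List ℕ) : ys.Nodup → (∀ y ∈ ys, y ∈ δ) →
        RigidO gs δ x ((ys.map LFObj.fvar).foldl LFObj.app (.fvar x))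
    | app {gs δ x y} (args : List LFObj) {Mi} : y ∉ gs → Mi ∈ args →
        RigidO gs δ x Mi →
        RigidO gs δ x (args.foldl LFObj.app (.fvar y))
    | abs {gs δ x A M} (y : ℕ) : y ∉ δ → y ∉ gs → y ≠ x → y ∉ namesO M →
        RigidO gs (δ ++ [y]) x (openO 0 (.fvar y) M) →
        RigidO gs δ x (.lam A M)
  /-- Γ⃗; x ⊢t A : x occurs rigidly in the type A. -/
  inductive RigidT : List ℕ → ℕ → LFType → Prop
    | app {gs x A} (Mi : LFObj) : IsBaseT A → Mi ∈ argsLF A → RigidO gs [] x Mi →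
        RigidT gs x A
    | pi {gs x A B} (y : ℕ) : y ∉ gs → y ≠ x → y ∉ namesT B →
        RigidT (gs ++ [y]) x (openT 0 (.fvar y) B) →
        RigidT gs x (.pi A B)
end

/-! ## The optimized translation -/

mutual
  /-- ⦇A⦈Γ⃗ M = F : negative (program clause) optimized translation. -/
  inductive OptN : List ℕ → LFType → HTerm → HForm → Prop
    | base {gs A M} : IsBaseT A → OptN gs A M (.papp (headT A) (M :: argsT A))
    | pi_rigid {gs A B M F} (x : ℕ) :
        x ∉ gs → x ∉ namesT A → x ∉ namesT B → x ∉ hcons M →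
        RigidT (gs ++ [x]) x (openT 0 (.fvar x) B) →
        OptN (gs ++ [x]) (openT 0 (.fvar x) B) (.app M (.con x)) F →
        OptN gs (.pi A B) M (.all (phiT A) (.imp .top (closeF 0 x F)))
    | pi_nonrigid {gs A B M FA F} (x : ℕ) :
        x ∉ gs → x ∉ namesT A → x ∉ namesT B → x ∉ hcons M →
        ¬ RigidT (gs ++ [x]) x (openT 0 (.fvar x) B) →
        OptP A (.con x) FA →
        OptN (gs ++ [x]) (openT 0 (.fvar x) B) (.app M (.con x)) F →
        OptN gs (.pi A B) M (.all (phiT A) (closeF 0 x (.imp FA F)))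
  /-- ⦃A⦄ M = F : positive (goal) optimized translation. -/
  inductive OptP : LFType → HTerm → HForm → Prop
    | base {A M} : IsBaseT A → OptP A M (.papp (headT A) (M :: argsT A))
    | pi {A B M FA F} (x : ℕ) :
        x ∉ namesT A → x ∉ namesT B → x ∉ hcons M →
        OptN [] A (.con x) FA →
        OptP (openT 0 (.fvar x) B) (.app M (.con x)) F →
        OptP (.pi A B) M (.all (phiT A) (closeF 0 x (.imp FA F)))
end

inductive OptCtx : Ctx → List HForm → Prop
  | nil : OptCtx [] []
  | kind {Γ Ds u K} : OptCtx Γ Ds → OptCtx ((u, .kind K) :: Γ) Ds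
  | type {Γ Ds x A F} : OptN [] A (.con x) F → OptCtx Γ Ds →
      OptCtx ((x, .type A) :: Γ) (F :: Ds)

/-! ## Miscellaneous -/

/-- Π-prefix construction: mkPi [B1,...,Bn] A = ΠB1....ΠBn. A (de Bruijn). -/
def mkPi (Bs : List LFType) (A : LFType) : LFType := Bs.foldr .pi A

/-- instantiate the de Bruijn variables of the body of an n-ary Π-prefix:
the i-th term replaces index (n-1-i). -/
def instT (ts : List LFObj) (A : LFType) : LFType :=
  (((List.range ts.length).reverse).zip ts).foldl (fun A p => openT p.1 p.2 A) A

/-- environment mapping names to hohh terms. -/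
def envOf (xs : List ℕ) (ts : List HTerm) : ℕ → Option HTerm :=
  fun v => ((xs.zip ts).find? (fun p => p.1 = v)).map Prod.snd

/-- environment mapping names to LF objects. -/
def lfEnvOf (xs : List ℕ) (ts : List LFObj) : ℕ → Option LFObj :=
  fun v => ((xs.zip ts).find? (fun p => p.1 = v)).map Prod.snd

/-! (A' ~ A)σ : equality of types up to σ-instantiated encodings of embedded objects. -/
mutual
  inductive KSim (σ : ℕ → Option HTerm) : LFKind → LFKind → Prop
    | type : KSim σ .type .type
    | pi {A A' K K'} : TSim σ A' A → KSim σ K' K → KSim σ (.pi A' K') (.pi A K)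
  inductive TSim (σ : ℕ → Option HTerm) : LFType → LFType → Prop
    | tvar {u} : TSim σ (.tvar u) (.tvar u)
    | pi {A A' B B'} : TSim σ A' A → TSim σ B' B → TSim σ (.pi A' B') (.pi A B)
    | lam {A A' B B'} : TSim σ A' A → TSim σ B' B → TSim σ (.lam A' B') (.lam A B)
    | app {A A' M M'} : TSim σ A' A → encO M' = hsubstSim σ (encO M) →
        TSim σ (.app A' M') (.app A M)
end

def EVSim (σ : ℕ → Option HTerm) : EVal → EVal → Prop
  | .kind K', .kind K => KSim σ K' K
  | .type A', .type A => TSim σ A' A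
  | _, _ => False

def CtxSim (σ : ℕ → Option HTerm) (Δ' Δ : Ctx) : Prop :=
  List.Forall₂ (fun p q => p.1 = q.1 ∧ EVSim σ p.2 q.2) Δ' Δ

/-! ## Normal-expression LF derivations (for Statement 14) -/

def NormEV : EVal → Prop
  | .kind K => NormK K
  | .type A => NormT A

def NormCtxP (Γ : Ctx) : Prop := ∀ p ∈ Γ, NormEV p.2

def NormJudg : LFJudg → Prop
  | .kind K => NormK K
  | .istype A K => NormT A ∧ NormK K
  | .isobj M A => NormO M ∧ NormT A

/-! LF typing restricted so that every expression in the derivation is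
beta-normal; in abstraction rules the annotation and the Pi-domain coincide. -/
mutual
  inductive WfNCtx : Ctx → Prop
    | nil : WfNCtx []
    | kind {Γ K u} : WfNKind Γ K → WfNCtx Γ → u ∉ ctxNames Γ →
        WfNCtx ((u, .kind K) :: Γ)
    | type {Γ A x} : WfNType Γ A .type → WfNCtx Γ → x ∉ ctxNames Γ →
        WfNCtx ((x, .type A) :: Γ)
  inductive WfNKind : Ctx → LFKind → Prop
    | type {Γ} : WfNCtx Γ → WfNKind Γ .type
    | pi {Γ A K} (x : ℕ) : WfNType Γ A .type →
        x ∉ ctxNames Γ → x ∉ namesK K →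
        WfNKind ((x, .type A) :: Γ) (openK 0 (.fvar x) K) →
        WfNKind Γ (.pi A K)
  inductive WfNType : Ctx → LFType → LFKind → Prop
    | var {Γ u K} : WfNCtx Γ → (u, .kind K) ∈ Γ → NormK K →
        WfNType Γ (.tvar u) K
    | pi {Γ A B} (x : ℕ) : WfNType Γ A .type →
        x ∉ ctxNames Γ → x ∉ namesT B →
        WfNType ((x, .type A) :: Γ) (openT 0 (.fvar x) B) .type →
        WfNType Γ (.pi A B) .type
    | lam {Γ A B K} (x : ℕ) : WfNType Γ A .type → NormT A →
        x ∉ ctxNames Γ → x ∉ namesT B → x ∉ namesK K →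
        WfNType ((x, .type A) :: Γ) (openT 0 (.fvar x) B) (openK 0 (.fvar x) K) →
        WfNType Γ (.lam A B) (.pi A K)
    | app {Γ A B K K' M} : WfNType Γ A (.pi B K) → WfNObj Γ M B →
        KNF (openK 0 M K) K' → WfNType Γ (.app A M) K'
  inductive WfNObj : Ctx → LFObj → LFType → Prop
    | var {Γ x A} : WfNCtx Γ → (x, .type A) ∈ Γ → NormT A →
        WfNObj Γ (.fvar x) A
    | lam {Γ A B M} (x : ℕ) : WfNType Γ A .type → NormT A →
        x ∉ ctxNames Γ → x ∉ namesO M → x ∉ namesT B →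
        WfNObj ((x, .type A) :: Γ) (openO 0 (.fvar x) M) (openT 0 (.fvar x) B) →
        WfNObj Γ (.lam A M) (.pi A B)
    | app {Γ M N A B B'} : WfNObj Γ M (.pi A B) → WfNObj Γ N A →
        TNF (openT 0 N B) B' → WfNObj Γ (.app M N) B'
end

def WfNJudg (Γ : Ctx) : LFJudg → Prop
  | .kind K => WfNKind Γ K
  | .istype A K => WfNType Γ A K
  | .isobj M A => WfNObj Γ M A

/-! ## Auxiliary development for Statement 17 -/

section Aux17

/-- a fresh natural number avoiding a list. -/
def freshN (l : List ℕ) : ℕ := l.foldr max 0 + 1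

theorem le_foldr_max : ∀ {l : List ℕ} {a : ℕ}, a ∈ l → a ≤ l.foldr max 0 := by
  intro l; induction l with
  | nil => intro a h; cases h
  | cons b t ih =>
    intro a h
    rcases List.mem_cons.1 h with rfl | h
    · exact le_max_left _ _
    · exact le_trans (ih h) (le_max_right _ _)

theorem freshN_not_mem {l : List ℕ} : freshN l ∉ l := by
  intro h
  have := le_foldr_max h
  simp only [freshN] at this ⊢
  omega

theorem forall₂_mem {α β : Type*} {R : α → β → Prop} :
    ∀ {l : List α} {l' : List β}, List.Forall₂ R l l' → ∀ {a}, a ∈ l → ∃ b ∈ l', R a b := by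
  intro l l' h
  induction h with
  | nil => intro a h; cases h
  | cons hR _ ih =>
    intro a ha
    rcases List.mem_cons.1 ha with rfl | ha
    · exact ⟨_, List.mem_cons_self, hR⟩
    · obtain ⟨b, hb, hRb⟩ := ih ha
      exact ⟨b, List.mem_cons_of_mem _ hb, hRb⟩

/-! ### Spines -/

def mkSpine (u : ℕ) (args : List HTerm) : HTerm := args.foldl .app (.con u)

theorem mkSpine_append (u : ℕ) (as : List HTerm) (a : HTerm) :
    mkSpine u (as ++ [a]) = .app (mkSpine u as) a := by
  simp [mkSpine, List.foldl_append]

def sp : HTerm → Option (ℕ × List HTerm)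
  | .con u => some (u, [])
  | .app t a => (sp t).map fun p => (p.1, p.2 ++ [a])
  | _ => none

theorem sp_mkSpine (u : ℕ) (as : List HTerm) : sp (mkSpine u as) = some (u, as) := by
  induction as using List.reverseRecOn with
  | nil => rfl
  | append_singleton as a ih => rw [mkSpine_append]; simp [sp, ih]

theorem mkSpine_inj {u v : ℕ} {as bs : List HTerm} (h : mkSpine u as = mkSpine v bs) :
    u = v ∧ as = bs := by
  have h1 := sp_mkSpine u as
  rw [h, sp_mkSpine] at h1
  simp at h1
  exact ⟨h1.1.symm, h1.2.symm⟩

theorem foldl_app_hsubst (k : ℕ) (t : HTerm) :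
    ∀ (as : List HTerm) (h : HTerm),
      hsubst k t (as.foldl .app h) = (as.map (hsubst k t)).foldl .app (hsubst k t h)
  | [], h => rfl
  | a :: as, h => by
      simp only [List.foldl, List.map]
      rw [foldl_app_hsubst k t as]
      rfl

theorem hsubst_mkSpine (k : ℕ) (t : HTerm) (u : ℕ) (as : List HTerm) :
    hsubst k t (mkSpine u as) = mkSpine u (as.map (hsubst k t)) := by
  simp [mkSpine, foldl_app_hsubst, hsubst]

theorem foldl_app_closeT (k x : ℕ) :
    ∀ (as : List HTerm) (h : HTerm),
      closeT k x (as.foldl .app h) = (as.map (closeT k x)).foldl .app (closeT k x h)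
  | [], h => rfl
  | a :: as, h => by
      simp only [List.foldl, List.map]
      rw [foldl_app_closeT k x as]
      rfl

theorem closeT_mkSpine (k x u : ℕ) (hu : u ≠ x) (as : List HTerm) :
    closeT k x (mkSpine u as) = mkSpine u (as.map (closeT k x)) := by
  simp [mkSpine, foldl_app_closeT, closeT, hu]

/-! ### constant substitution and closing on terms -/

theorem hsubstCon_id {x : ℕ} {s : HTerm} : ∀ {t : HTerm}, x ∉ hcons t → hsubstCon x s t = t
  | .bvar n, _ => rfl
  | .con c, h => by
      simp [hcons] at h
      simp [hsubstCon, Ne.symm h]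
  | .lam τ t, h => by
      simp [hcons] at h
      simp [hsubstCon, hsubstCon_id (t := t) h]
  | .app t u, h => by
      simp [hcons] at h
      simp [hsubstCon, hsubstCon_id (t := t) h.1, hsubstCon_id (t := u) h.2]

theorem hcons_hsubstCon {x : ℕ} {s : HTerm} :
    ∀ {t : HTerm} {a : ℕ}, a ∈ hcons (hsubstCon x s t) → a ∈ hcons s ∨ a ∈ hcons t
  | .bvar n, a, h => by simp [hsubstCon, hcons] at h
  | .con c, a, h => by
      by_cases hc : c = x
      · simp [hsubstCon, hc] at h; exact Or.inl h
      · simp [hsubstCon, hc, hcons] at h ⊢; exact Or.inr h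
  | .lam τ t, a, h => by
      simp only [hsubstCon, hcons] at h
      rcases hcons_hsubstCon (t := t) h with h | h
      · exact Or.inl h
      · exact Or.inr h
  | .app t u, a, h => by
      simp only [hsubstCon, hcons, List.mem_append] at h ⊢
      rcases h with h | h
      · rcases hcons_hsubstCon (t := t) h with h | h
        · exact Or.inl h
        · exact Or.inr (Or.inl h)
      · rcases hcons_hsubstCon (t := u) h with h | h
        · exact Or.inl h
        · exact Or.inr (Or.inr h)

theorem hcons_closeT {x : ℕ} :
    ∀ {t : HTerm} {k a : ℕ}, a ∈ hcons (closeT k x t) → a ∈ hcons t ∧ a ≠ x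
  | .bvar n, k, a, h => by simp [closeT, hcons] at h
  | .con c, k, a, h => by
      by_cases hc : c = x
      · simp [closeT, hc, hcons] at h
      · simp [closeT, hc, hcons] at h ⊢; subst h; exact ⟨rfl, hc⟩
  | .lam τ t, k, a, h => hcons_closeT (t := t) h
  | .app t u, k, a, h => by
      simp only [closeT, hcons, List.mem_append] at h ⊢
      rcases h with h | h
      · exact ⟨Or.inl (hcons_closeT (t := t) h).1, (hcons_closeT (t := t) h).2⟩
      · exact ⟨Or.inr (hcons_closeT (t := u) h).1, (hcons_closeT (t := u) h).2⟩

/-- closing `x` is the same as renaming `x` to a fresh `y` and closing `y`. -/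
theorem closeT_ren {x y : ℕ} :
    ∀ {t : HTerm} {k : ℕ}, y ∉ hcons t → closeT k x t = closeT k y (hsubstCon x (.con y) t)
  | .bvar n, k, _ => rfl
  | .con c, k, h => by
      simp [hcons] at h
      by_cases hc : c = x
      · simp [closeT, hsubstCon, hc]
      · simp [closeT, hsubstCon, hc, Ne.symm h]
  | .lam τ t, k, h => by
      simp only [hcons] at h
      simp only [closeT, hsubstCon]
      rw [closeT_ren (t := t) h]
  | .app t u, k, h => by
      simp only [hcons, List.mem_append] at h
      push_neg at h
      simp only [closeT, hsubstCon]
      rw [closeT_ren (t := t) h.1, closeT_ren (t := u) h.2]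

theorem closeT_hsubstCon_comm {x y z : ℕ} (hzx : z ≠ x) (hzy : z ≠ y) :
    ∀ {t : HTerm} {k : ℕ},
      hsubstCon x (.con y) (closeT k z t) = closeT k z (hsubstCon x (.con y) t)
  | .bvar n, k => rfl
  | .con c, k => by
      by_cases hc : c = z
      · subst hc
        simp [closeT, hsubstCon, hzx]
      · by_cases hcx : c = x
        · subst hcx
          simp [closeT, hsubstCon, hc, Ne.symm hzy]
        · simp [closeT, hsubstCon, hc, hcx]
  | .lam τ t, k => by
      simp only [closeT, hsubstCon]
      rw [closeT_hsubstCon_comm hzx hzy (t := t)]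
  | .app t u, k => by
      simp only [closeT, hsubstCon]
      rw [closeT_hsubstCon_comm hzx hzy (t := t), closeT_hsubstCon_comm hzx hzy (t := u)]

/-! ### formula-level notions -/

def hconsF : HForm → List ℕ
  | .top => []
  | .hastype m a => hcons m ++ hcons a
  | .papp _ args => args.foldr (fun t l => hcons t ++ l) []
  | .imp f g => hconsF f ++ hconsF g
  | .all _ f => hconsF f

theorem mem_hconsF_papp {a u : ℕ} {args : List HTerm} :
    a ∈ hconsF (.papp u args) ↔ ∃ t ∈ args, a ∈ hcons t := by
  simp only [hconsF]
  induction args with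
  | nil => simp
  | cons b t ih => simp [List.foldr, ih]

def predsF : HForm → List ℕ
  | .papp u _ => [u]
  | .imp f g => predsF f ++ predsF g
  | .all _ f => predsF f
  | _ => []

def hsubstConF (c : ℕ) (s : HTerm) : HForm → HForm
  | .top => .top
  | .hastype m a => .hastype (hsubstCon c s m) (hsubstCon c s a)
  | .papp u args => .papp u (args.map (hsubstCon c s))
  | .imp f g => .imp (hsubstConF c s f) (hsubstConF c s g)
  | .all τ f => .all τ (hsubstConF c s f)

theorem hconsF_closeF {x : ℕ} :
    ∀ {F : HForm} {k a : ℕ}, a ∈ hconsF (closeF k x F) → a ∈ hconsF F ∧ a ≠ x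
  | .top, k, a, h => by simp [closeF, hconsF] at h
  | .hastype m b, k, a, h => by
      simp only [closeF, hconsF, List.mem_append] at h ⊢
      rcases h with h | h
      · exact ⟨Or.inl (hcons_closeT h).1, (hcons_closeT h).2⟩
      · exact ⟨Or.inr (hcons_closeT h).1, (hcons_closeT h).2⟩
  | .papp u args, k, a, h => by
      rw [show closeF k x (.papp u args) = .papp u (args.map (closeT k x)) from rfl,
        mem_hconsF_papp] at h
      obtain ⟨t, ht, hat⟩ := h
      simp only [List.mem_map] at ht
      obtain ⟨t0, ht0, rfl⟩ := ht
      exact ⟨mem_hconsF_papp.2 ⟨t0, ht0, (hcons_closeT hat).1⟩, (hcons_closeT hat).2⟩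
  | .imp f g, k, a, h => by
      simp only [closeF, hconsF, List.mem_append] at h ⊢
      rcases h with h | h
      · exact ⟨Or.inl (hconsF_closeF h).1, (hconsF_closeF h).2⟩
      · exact ⟨Or.inr (hconsF_closeF h).1, (hconsF_closeF h).2⟩
  | .all τ f, k, a, h => hconsF_closeF (F := f) h

theorem predsF_closeF {x : ℕ} : ∀ {F : HForm} {k : ℕ}, predsF (closeF k x F) = predsF F
  | .top, k => rfl
  | .hastype m b, k => rfl
  | .papp u args, k => rfl
  | .imp f g, k => by
      simp only [closeF, predsF]
      rw [predsF_closeF (F := f), predsF_closeF (F := g)]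
  | .all τ f, k => predsF_closeF (F := f)

theorem closeF_ren {x y : ℕ} :
    ∀ {F : HForm} {k : ℕ}, y ∉ hconsF F → closeF k x F = closeF k y (hsubstConF x (.con y) F)
  | .top, k, _ => rfl
  | .hastype m b, k, h => by
      simp only [hconsF, List.mem_append] at h
      push_neg at h
      simp only [closeF, hsubstConF]
      rw [closeT_ren h.1, closeT_ren h.2]
  | .papp u args, k, h => by
      show HForm.papp u _ = HForm.papp u _
      rw [List.map_map]
      congr 1
      apply List.map_congr_left
      intro t ht
      exact closeT_ren fun hy => h (mem_hconsF_papp.2 ⟨t, ht, hy⟩)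
  | .imp f g, k, h => by
      simp only [hconsF, List.mem_append] at h
      push_neg at h
      simp only [closeF, hsubstConF]
      rw [closeF_ren h.1, closeF_ren h.2]
  | .all τ f, k, h => by
      simp only [hconsF] at h
      simp only [closeF, hsubstConF]
      rw [closeF_ren (F := f) h]

theorem closeF_hsubstConF_comm {x y z : ℕ} (hzx : z ≠ x) (hzy : z ≠ y) :
    ∀ {F : HForm} {k : ℕ},
      hsubstConF x (.con y) (closeF k z F) = closeF k z (hsubstConF x (.con y) F)
  | .top, k => rfl
  | .hastype m b, k => by
      simp only [closeF, hsubstConF]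
      rw [closeT_hsubstCon_comm hzx hzy, closeT_hsubstCon_comm hzx hzy]
  | .papp u args, k => by
      show HForm.papp u _ = HForm.papp u _
      rw [List.map_map, List.map_map]
      congr 1
      apply List.map_congr_left
      intro t _
      exact closeT_hsubstCon_comm hzx hzy
  | .imp f g, k => by
      simp only [closeF, hsubstConF]
      rw [closeF_hsubstConF_comm hzx hzy (F := f), closeF_hsubstConF_comm hzx hzy (F := g)]
  | .all τ f, k => by
      simp only [closeF, hsubstConF]
      rw [closeF_hsubstConF_comm hzx hzy (F := f)]

/-! ### LF sizes -/

mutual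
  def sizeT : LFType → ℕ
    | .tvar _ => 1
    | .pi A B => sizeT A + sizeT B + 1
    | .lam A B => sizeT A + sizeT B + 1
    | .app A M => sizeT A + sizeO M + 1
  def sizeO : LFObj → ℕ
    | .bvar _ => 1
    | .fvar _ => 1
    | .lam A M => sizeT A + sizeO M + 1
    | .app M N => sizeO M + sizeO N + 1
end

mutual
  theorem sizeT_open : ∀ (A : LFType) (k x : ℕ), sizeT (openT k (.fvar x) A) = sizeT A
    | .tvar _, _, _ => rfl
    | .pi A B, k, x => by
        simp only [openT, sizeT, sizeT_open A k x, sizeT_open B (k+1) x]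
    | .lam A B, k, x => by
        simp only [openT, sizeT, sizeT_open A k x, sizeT_open B (k+1) x]
    | .app A M, k, x => by
        simp only [openT, sizeT, sizeT_open A k x, sizeO_open M k x]
  theorem sizeO_open : ∀ (M : LFObj) (k x : ℕ), sizeO (openO k (.fvar x) M) = sizeO M
    | .bvar n, k, x => by
        simp only [openO]
        split <;> rfl
    | .fvar _, _, _ => rfl
    | .lam A M, k, x => by
        simp only [openO, sizeO, sizeT_open A k x, sizeO_open M (k+1) x]
    | .app M N, k, x => by
        simp only [openO, sizeO, sizeO_open M k x, sizeO_open N k x]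
end

/-! ### type-family names -/

mutual
  def tvT : LFType → List ℕ
    | .tvar u => [u]
    | .pi A B => tvT A ++ tvT B
    | .lam A B => tvT A ++ tvT B
    | .app A M => tvT A ++ tvO M
  def tvO : LFObj → List ℕ
    | .bvar _ => []
    | .fvar _ => []
    | .lam A M => tvT A ++ tvO M
    | .app M N => tvO M ++ tvO N
end

mutual
  theorem tvT_sub_namesT : ∀ {A : LFType} {a : ℕ}, a ∈ tvT A → a ∈ namesT A
    | .tvar u, a, h => h
    | .pi A B, a, h => by
        simp only [tvT, namesT, List.mem_append] at h ⊢
        exact h.imp (fun h => tvT_sub_namesT h) (fun h => tvT_sub_namesT h)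
    | .lam A B, a, h => by
        simp only [tvT, namesT, List.mem_append] at h ⊢
        exact h.imp (fun h => tvT_sub_namesT h) (fun h => tvT_sub_namesT h)
    | .app A M, a, h => by
        simp only [tvT, namesT, List.mem_append] at h ⊢
        exact h.imp (fun h => tvT_sub_namesT h) (fun h => tvO_sub_namesO h)
  theorem tvO_sub_namesO : ∀ {M : LFObj} {a : ℕ}, a ∈ tvO M → a ∈ namesO M
    | .bvar _, a, h => by simp [tvO] at h
    | .fvar _, a, h => by simp [tvO] at h
    | .lam A M, a, h => by
        simp only [tvO, namesO, List.mem_append] at h ⊢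
        exact h.imp (fun h => tvT_sub_namesT h) (fun h => tvO_sub_namesO h)
    | .app M N, a, h => by
        simp only [tvO, namesO, List.mem_append] at h ⊢
        exact h.imp (fun h => tvO_sub_namesO h) (fun h => tvO_sub_namesO h)
end

mutual
  theorem tvT_open : ∀ {A : LFType} {k : ℕ} {N : LFObj} {a : ℕ},
      a ∈ tvT (openT k N A) → a ∈ tvT A ∨ a ∈ tvO N
    | .tvar u, k, N, a, h => Or.inl h
    | .pi A B, k, N, a, h => by
        simp only [openT, tvT, List.mem_append] at h ⊢
        rcases h with h | h
        · rcases tvT_open h with h | h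
          · exact Or.inl (Or.inl h)
          · exact Or.inr h
        · rcases tvT_open h with h | h
          · exact Or.inl (Or.inr h)
          · exact Or.inr h
    | .lam A B, k, N, a, h => by
        simp only [openT, tvT, List.mem_append] at h ⊢
        rcases h with h | h
        · rcases tvT_open h with h | h
          · exact Or.inl (Or.inl h)
          · exact Or.inr h
        · rcases tvT_open h with h | h
          · exact Or.inl (Or.inr h)
          · exact Or.inr h
    | .app A M, k, N, a, h => by
        simp only [openT, tvT, List.mem_append] at h ⊢
        rcases h with h | h
        · rcases tvT_open h with h | h
          · exact Or.inl (Or.inl h)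
          · exact Or.inr h
        · rcases tvO_open h with h | h
          · exact Or.inl (Or.inr h)
          · exact Or.inr h
  theorem tvO_open : ∀ {M : LFObj} {k : ℕ} {N : LFObj} {a : ℕ},
      a ∈ tvO (openO k N M) → a ∈ tvO M ∨ a ∈ tvO N
    | .bvar n, k, N, a, h => by
        simp only [openO] at h
        split at h
        · exact Or.inr h
        · simp [tvO] at h
    | .fvar _, k, N, a, h => by simp [openO, tvO] at h
    | .lam A M, k, N, a, h => by
        simp only [openO, tvO, List.mem_append] at h ⊢
        rcases h with h | h
        · rcases tvT_open h with h | h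
          · exact Or.inl (Or.inl h)
          · exact Or.inr h
        · rcases tvO_open h with h | h
          · exact Or.inl (Or.inr h)
          · exact Or.inr h
    | .app M N', k, N, a, h => by
        simp only [openO, tvO, List.mem_append] at h ⊢
        rcases h with h | h
        · rcases tvO_open h with h | h
          · exact Or.inl (Or.inl h)
          · exact Or.inr h
        · rcases tvO_open h with h | h
          · exact Or.inl (Or.inr h)
          · exact Or.inr h
end

theorem headT_mem_tvT : ∀ {A : LFType}, IsBaseT A → headT A ∈ tvT A
  | .tvar u, _ => by simp [headT, tvT]
  | .app A M, h => by
      simp only [headT, tvT, List.mem_append]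
      exact Or.inl (headT_mem_tvT h)

/-! ### names, opening, renaming -/

mutual
  theorem namesT_open : ∀ {A : LFType} {k : ℕ} {N : LFObj} {a : ℕ},
      a ∈ namesT (openT k N A) → a ∈ namesT A ∨ a ∈ namesO N
    | .tvar u, k, N, a, h => Or.inl h
    | .pi A B, k, N, a, h => by
        simp only [openT, namesT, List.mem_append] at h ⊢
        rcases h with h | h
        · rcases namesT_open h with h | h
          · exact Or.inl (Or.inl h)
          · exact Or.inr h
        · rcases namesT_open h with h | h
          · exact Or.inl (Or.inr h)
          · exact Or.inr h
    | .lam A B, k, N, a, h => by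
        simp only [openT, namesT, List.mem_append] at h ⊢
        rcases h with h | h
        · rcases namesT_open h with h | h
          · exact Or.inl (Or.inl h)
          · exact Or.inr h
        · rcases namesT_open h with h | h
          · exact Or.inl (Or.inr h)
          · exact Or.inr h
    | .app A M, k, N, a, h => by
        simp only [openT, namesT, List.mem_append] at h ⊢
        rcases h with h | h
        · rcases namesT_open h with h | h
          · exact Or.inl (Or.inl h)
          · exact Or.inr h
        · rcases namesO_open h with h | h
          · exact Or.inl (Or.inr h)
          · exact Or.inr h
  theorem namesO_open : ∀ {M : LFObj} {k : ℕ} {N : LFObj} {a : ℕ},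
      a ∈ namesO (openO k N M) → a ∈ namesO M ∨ a ∈ namesO N
    | .bvar n, k, N, a, h => by
        simp only [openO] at h
        split at h
        · exact Or.inr h
        · simp [namesO] at h
    | .fvar _, k, N, a, h => Or.inl h
    | .lam A M, k, N, a, h => by
        simp only [openO, namesO, List.mem_append] at h ⊢
        rcases h with h | h
        · rcases namesT_open h with h | h
          · exact Or.inl (Or.inl h)
          · exact Or.inr h
        · rcases namesO_open h with h | h
          · exact Or.inl (Or.inr h)
          · exact Or.inr h
    | .app M N', k, N, a, h => by
        simp only [openO, namesO, List.mem_append] at h ⊢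
        rcases h with h | h
        · rcases namesO_open h with h | h
          · exact Or.inl (Or.inl h)
          · exact Or.inr h
        · rcases namesO_open h with h | h
          · exact Or.inl (Or.inr h)
          · exact Or.inr h
end

mutual
  theorem namesT_rename {x y : ℕ} : ∀ {A : LFType} {a : ℕ},
      a ∈ namesT (renameT x y A) → a = y ∨ a ∈ namesT A
    | .tvar u, a, h => by
        simp only [renameT, namesT, List.mem_singleton] at h ⊢
        split at h
        · exact Or.inl h
        · exact Or.inr h
    | .pi A B, a, h => by
        simp only [renameT, namesT, List.mem_append] at h ⊢
        rcases h with h | h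
        · rcases namesT_rename h with h | h
          · exact Or.inl h
          · exact Or.inr (Or.inl h)
        · rcases namesT_rename h with h | h
          · exact Or.inl h
          · exact Or.inr (Or.inr h)
    | .lam A B, a, h => by
        simp only [renameT, namesT, List.mem_append] at h ⊢
        rcases h with h | h
        · rcases namesT_rename h with h | h
          · exact Or.inl h
          · exact Or.inr (Or.inl h)
        · rcases namesT_rename h with h | h
          · exact Or.inl h
          · exact Or.inr (Or.inr h)
    | .app A M, a, h => by
        simp only [renameT, namesT, List.mem_append] at h ⊢
        rcases h with h | h
        · rcases namesT_rename h with h | h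
          · exact Or.inl h
          · exact Or.inr (Or.inl h)
        · rcases namesO_rename h with h | h
          · exact Or.inl h
          · exact Or.inr (Or.inr h)
  theorem namesO_rename {x y : ℕ} : ∀ {M : LFObj} {a : ℕ},
      a ∈ namesO (renameO x y M) → a = y ∨ a ∈ namesO M
    | .bvar _, a, h => by simp [renameO, namesO] at h
    | .fvar z, a, h => by
        simp only [renameO, namesO, List.mem_singleton] at h ⊢
        split at h
        · exact Or.inl h
        · exact Or.inr h
    | .lam A M, a, h => by
        simp only [renameO, namesO, List.mem_append] at h ⊢
        rcases h with h | h
        · rcases namesT_rename h with h | h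
          · exact Or.inl h
          · exact Or.inr (Or.inl h)
        · rcases namesO_rename h with h | h
          · exact Or.inl h
          · exact Or.inr (Or.inr h)
    | .app M N, a, h => by
        simp only [renameO, namesO, List.mem_append] at h ⊢
        rcases h with h | h
        · rcases namesO_rename h with h | h
          · exact Or.inl h
          · exact Or.inr (Or.inl h)
        · rcases namesO_rename h with h | h
          · exact Or.inl h
          · exact Or.inr (Or.inr h)
end

mutual
  theorem renameT_id {x y : ℕ} : ∀ {A : LFType}, x ∉ namesT A → renameT x y A = A
    | .tvar u, h => by
        simp only [namesT, List.mem_singleton] at h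
        simp [renameT, Ne.symm h]
    | .pi A B, h => by
        simp only [namesT, List.mem_append] at h
        push_neg at h
        simp only [renameT]
        rw [renameT_id h.1, renameT_id h.2]
    | .lam A B, h => by
        simp only [namesT, List.mem_append] at h
        push_neg at h
        simp only [renameT]
        rw [renameT_id h.1, renameT_id h.2]
    | .app A M, h => by
        simp only [namesT, List.mem_append] at h
        push_neg at h
        simp only [renameT]
        rw [renameT_id h.1, renameO_id h.2]
  theorem renameO_id {x y : ℕ} : ∀ {M : LFObj}, x ∉ namesO M → renameO x y M = M
    | .bvar _, _ => rfl
    | .fvar z, h => by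
        simp only [namesO, List.mem_singleton] at h
        simp [renameO, Ne.symm h]
    | .lam A M, h => by
        simp only [namesO, List.mem_append] at h
        push_neg at h
        simp only [renameO]
        rw [renameT_id h.1, renameO_id h.2]
    | .app M N, h => by
        simp only [namesO, List.mem_append] at h
        push_neg at h
        simp only [renameO]
        rw [renameO_id h.1, renameO_id h.2]
end

mutual
  theorem renameT_open (x y : ℕ) : ∀ (A : LFType) (k : ℕ) (N : LFObj),
      renameT x y (openT k N A) = openT k (renameO x y N) (renameT x y A)
    | .tvar u, k, N => rfl
    | .pi A B, k, N => by
        simp only [openT, renameT]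
        rw [renameT_open x y A, renameT_open x y B]
    | .lam A B, k, N => by
        simp only [openT, renameT]
        rw [renameT_open x y A, renameT_open x y B]
    | .app A M, k, N => by
        simp only [openT, renameT]
        rw [renameT_open x y A, renameO_open x y M]
  theorem renameO_open (x y : ℕ) : ∀ (M : LFObj) (k : ℕ) (N : LFObj),
      renameO x y (openO k N M) = openO k (renameO x y N) (renameO x y M)
    | .bvar n, k, N => by
        simp only [openO, renameO]
        split <;> rfl
    | .fvar z, k, N => by simp [openO, renameO]
    | .lam A M, k, N => by
        simp only [openO, renameO]
        rw [renameT_open x y A, renameO_open x y M]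
    | .app M N', k, N => by
        simp only [openO, renameO]
        rw [renameO_open x y M, renameO_open x y N']
end

/-! ### encoding lemmas -/

theorem phiT_rename (x y : ℕ) : ∀ (A : LFType), phiT (renameT x y A) = phiT A
  | .tvar u => rfl
  | .pi A B => by
      simp only [renameT, phiT]
      rw [phiT_rename x y A, phiT_rename x y B]
  | .lam A B => rfl
  | .app A M => rfl

theorem encO_rename (x y : ℕ) : ∀ (M : LFObj),
    encO (renameO x y M) = hsubstCon x (.con y) (encO M)
  | .bvar n => rfl
  | .fvar z => by
      simp only [renameO, encO, hsubstCon]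
      split <;> simp_all
  | .lam A M => by
      simp only [renameO, encO, hsubstCon]
      rw [phiT_rename x y A, encO_rename x y M]
  | .app M N => by
      simp only [renameO, encO, hsubstCon]
      rw [encO_rename x y M, encO_rename x y N]

theorem encT_rename_base (x y : ℕ) : ∀ (A : LFType), IsBaseT A →
    encT (renameT x y A) = hsubstCon x (.con y) (encT A)
  | .tvar u, _ => by
      simp only [renameT, encT, hsubstCon]
      split <;> simp_all
  | .app A M, h => by
      simp only [renameT, encT, hsubstCon]
      rw [encT_rename_base x y A h, encO_rename x y M]

theorem IsBaseT_rename {x y : ℕ} : ∀ {A : LFType}, IsBaseT A → IsBaseT (renameT x y A)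
  | .tvar u, _ => by simp [renameT, IsBaseT]
  | .app A M, h => IsBaseT_rename (A := A) h

theorem encT_spine : ∀ {A : LFType}, IsBaseT A → encT A = mkSpine (headT A) (argsT A)
  | .tvar u, _ => rfl
  | .app A M, h => by
      simp only [encT, headT, argsT]
      rw [mkSpine_append, encT_spine (A := A) h]

theorem hcons_encO : ∀ {M : LFObj} {a : ℕ}, a ∈ hcons (encO M) → a ∈ namesO M
  | .bvar n, a, h => by simp [encO, hcons] at h
  | .fvar z, a, h => h
  | .lam A M, a, h => by
      simp only [encO, hcons] at h
      simp only [namesO, List.mem_append]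
      exact Or.inr (hcons_encO h)
  | .app M N, a, h => by
      simp only [encO, hcons, List.mem_append] at h
      simp only [namesO, List.mem_append]
      exact h.imp (fun h => hcons_encO h) (fun h => hcons_encO h)

theorem hcons_encT_base : ∀ {A : LFType}, IsBaseT A →
    ∀ {a : ℕ}, a ∈ hcons (encT A) → a ∈ namesT A
  | .tvar u, _, a, h => h
  | .app A M, hb, a, h => by
      simp only [encT, hcons, List.mem_append] at h
      simp only [namesT, List.mem_append]
      rcases h with h | h
      · exact Or.inl (hcons_encT_base (A := A) hb h)
      · exact Or.inr (hcons_encO h)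

/-! ### constants of simple translations -/

theorem SimpleT_cons {A M F} (h : SimpleT A M F) :
    ∀ {a}, a ∈ hconsF F → a ∈ namesT A ∨ a ∈ hcons M := by
  induction h with
  | base hb =>
      intro a ha
      simp only [hconsF, List.mem_append] at ha
      rcases ha with ha | ha
      · exact Or.inr ha
      · exact Or.inl (hcons_encT_base hb ha)
  | pi x hxA hxB hxM hFA hFB ihA ihB =>
      intro a ha
      rename_i A B M FA FB
      have ha' : a ∈ hconsF (closeF 0 x (.imp FA FB)) := ha
      obtain ⟨h1, hne⟩ := hconsF_closeF ha'
      simp only [hconsF, List.mem_append] at h1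
      simp only [namesT, List.mem_append]
      rcases h1 with h1 | h1
      · rcases ihA h1 with h2 | h2
        · exact Or.inl (Or.inl h2)
        · simp only [hcons, List.mem_singleton] at h2
          exact absurd h2 hne
      · rcases ihB h1 with h2 | h2
        · rcases namesT_open h2 with h3 | h3
          · exact Or.inl (Or.inr h3)
          · simp only [namesO, List.mem_singleton] at h3
            exact absurd h3 hne
        · simp only [hcons, List.mem_append, List.mem_singleton] at h2
          rcases h2 with h2 | h2
          · exact Or.inr h2
          · exact absurd h2 hne

/-! ### renaming for the simple translation -/

theorem simple_rename : ∀ (A : LFType) (M : HTerm) (F : HForm) (x y : ℕ),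
    SimpleT A M F →
    SimpleT (renameT x y A) (hsubstCon x (.con y) M) (hsubstConF x (.con y) F) := by
  intro A M F x y h
  cases h with
  | base hb =>
      rw [show hsubstConF x (.con y) (.hastype M (encT A)) =
          .hastype (hsubstCon x (.con y) M) (hsubstCon x (.con y) (encT A)) from rfl,
        ← encT_rename_base x y A hb]
      exact SimpleT.base (IsBaseT_rename hb)
  | pi x0 hx0A hx0B hx0M hFA hFB =>
      rename_i A0 B FA FB
      have hzl : freshN (x :: y :: (namesT A0 ++ namesT B ++ hcons M ++ hconsF FA ++ hconsF FB))
          ∉ (x :: y :: (namesT A0 ++ namesT B ++ hcons M ++ hconsF FA ++ hconsF FB)) :=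
        freshN_not_mem
      set z := freshN (x :: y :: (namesT A0 ++ namesT B ++ hcons M ++ hconsF FA ++ hconsF FB))
        with hzdef
      have hzx : z ≠ x := fun h => hzl (by simp [h])
      have hzy : z ≠ y := fun h => hzl (by simp [h])
      have hzA0 : z ∉ namesT A0 := fun h => hzl (by simp [h])
      have hzB : z ∉ namesT B := fun h => hzl (by simp [h])
      have hzM : z ∉ hcons M := fun h => hzl (by simp [h])
      have hzFA : z ∉ hconsF FA := fun h => hzl (by simp [h])
      have hzFB : z ∉ hconsF FB := fun h => hzl (by simp [h])
      -- step 1: convert the binder x0 to z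
      have hFAz : SimpleT A0 (.con z) (hsubstConF x0 (.con z) FA) := by
        have h1 := simple_rename A0 (.con x0) FA x0 z hFA
        rwa [renameT_id hx0A,
          show hsubstCon x0 (.con z) (.con x0) = .con z from by simp [hsubstCon]] at h1
      have hFBz : SimpleT (openT 0 (.fvar z) B) (.app M (.con z))
          (hsubstConF x0 (.con z) FB) := by
        have h1 := simple_rename (openT 0 (.fvar x0) B) (.app M (.con x0)) FB x0 z hFB
        rw [renameT_open, renameT_id hx0B,
          show renameO x0 z (.fvar x0) = .fvar z from by simp [renameO]] at h1
        rwa [show hsubstCon x0 (.con z) (.app M (.con x0)) = .app M (.con z) from by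
          simp only [hsubstCon]
          rw [hsubstCon_id hx0M]
          simp [hsubstCon]] at h1
      -- step 2: rename x to y underneath the binder z
      have hFAy : SimpleT (renameT x y A0) (.con z)
          (hsubstConF x (.con y) (hsubstConF x0 (.con z) FA)) := by
        have h1 := simple_rename A0 (.con z) _ x y hFAz
        rwa [show hsubstCon x (.con y) (.con z) = .con z from by simp [hsubstCon, hzx]] at h1
      have hFBy : SimpleT (openT 0 (.fvar z) (renameT x y B))
          (.app (hsubstCon x (.con y) M) (.con z))
          (hsubstConF x (.con y) (hsubstConF x0 (.con z) FB)) := by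
        have h1 := simple_rename (openT 0 (.fvar z) B) (.app M (.con z)) _ x y hFBz
        rw [renameT_open,
          show renameO x y (.fvar z) = .fvar z from by simp [renameO, hzx]] at h1
        rwa [show hsubstCon x (.con y) (.app M (.con z)) =
            .app (hsubstCon x (.con y) M) (.con z) from by simp [hsubstCon, hzx]] at h1
      -- freshness of z for the renamed data
      have f1 : z ∉ namesT (renameT x y A0) := by
        intro h1
        rcases namesT_rename h1 with h1 | h1
        · exact hzy h1
        · exact hzA0 h1
      have f2 : z ∉ namesT (renameT x y B) := by
        intro h1
        rcases namesT_rename h1 with h1 | h1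
        · exact hzy h1
        · exact hzB h1
      have f3 : z ∉ hcons (hsubstCon x (.con y) M) := by
        intro h1
        rcases hcons_hsubstCon h1 with h1 | h1
        · simp only [hcons, List.mem_singleton] at h1
          exact hzy h1
        · exact hzM h1
      have hres := SimpleT.pi z f1 f2 f3 hFAy hFBy
      have hzimp : z ∉ hconsF (.imp FA FB) := by
        simp only [hconsF, List.mem_append, not_or]
        exact ⟨hzFA, hzFB⟩
      have e1 : closeF 0 x0 (.imp FA FB) =
          closeF 0 z (.imp (hsubstConF x0 (.con z) FA) (hsubstConF x0 (.con z) FB)) :=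
        closeF_ren hzimp
      show SimpleT (.pi (renameT x y A0) (renameT x y B)) (hsubstCon x (.con y) M)
        (.all (phiT A0) (hsubstConF x (.con y) (closeF 0 x0 (.imp FA FB))))
      rw [e1, closeF_hsubstConF_comm hzx hzy, ← phiT_rename x y A0]
      exact hres
termination_by A _ _ _ _ _ => sizeT A
decreasing_by
  all_goals simp only [sizeT_open, sizeT] <;> omega

theorem simple_pi_rename {A B : LFType} {M : HTerm} {FA FB : HForm} (x x' : ℕ)
    (hxA : x ∉ namesT A) (hxB : x ∉ namesT B) (hxM : x ∉ hcons M)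
    (hx'A : x' ∉ namesT A) (hx'B : x' ∉ namesT B) (hx'M : x' ∉ hcons M)
    (hFA : SimpleT A (.con x) FA)
    (hFB : SimpleT (openT 0 (.fvar x) B) (.app M (.con x)) FB) :
    ∃ FA' FB', SimpleT A (.con x') FA' ∧
      SimpleT (openT 0 (.fvar x') B) (.app M (.con x')) FB' ∧
      closeF 0 x (.imp FA FB) = closeF 0 x' (.imp FA' FB') := by
  by_cases hxx : x = x'
  · subst hxx
    exact ⟨FA, FB, hFA, hFB, rfl⟩
  · refine ⟨hsubstConF x (.con x') FA, hsubstConF x (.con x') FB, ?_, ?_, ?_⟩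
    · have h1 := simple_rename A (.con x) FA x x' hFA
      rwa [renameT_id hxA,
        show hsubstCon x (.con x') (.con x) = .con x' from by simp [hsubstCon]] at h1
    · have h1 := simple_rename (openT 0 (.fvar x) B) (.app M (.con x)) FB x x' hFB
      rw [renameT_open, renameT_id hxB,
        show renameO x x' (.fvar x) = .fvar x' from by simp [renameO]] at h1
      rwa [show hsubstCon x (.con x') (.app M (.con x)) = .app M (.con x') from by
        simp only [hsubstCon]
        rw [hsubstCon_id hxM]
        simp [hsubstCon]] at h1
    · have hx'imp : x' ∉ hconsF (.imp FA FB) := by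
        simp only [hconsF, List.mem_append, not_or]
        constructor
        · intro h1
          rcases SimpleT_cons hFA h1 with h2 | h2
          · exact hx'A h2
          · simp only [hcons, List.mem_singleton] at h2
            exact hxx h2.symm
        · intro h1
          rcases SimpleT_cons hFB h1 with h2 | h2
          · rcases namesT_open h2 with h3 | h3
            · exact hx'B h3
            · simp only [namesO, List.mem_singleton] at h3
              exact hxx h3.symm
          · simp only [hcons, List.mem_append, List.mem_singleton] at h2
            rcases h2 with h2 | h2
            · exact hx'M h2
            · exact hxx h2.symm
      exact closeF_ren hx'imp

/-! ### predicate heads of the optimized translation -/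

theorem opt_preds : ∀ (n : ℕ) (A : LFType), sizeT A ≤ n →
    ((∀ gs M F, OptN gs A M F → ∀ {u : ℕ}, u ∈ predsF F → u ∈ tvT A) ∧
     (∀ M F, OptP A M F → ∀ {u : ℕ}, u ∈ predsF F → u ∈ tvT A)) := by
  intro n
  induction n with
  | zero =>
      intro A hA
      exfalso
      cases A <;> simp [sizeT] at hA
  | succ n ih =>
    intro A hA
    constructor
    · intro gs M F h u hu
      cases h with
      | base hb =>
          simp only [predsF, List.mem_singleton] at hu
          subst hu
          exact headT_mem_tvT hb
      | pi_rigid x hgs hxA hxB hxM hrig hF =>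
          rename_i A0 B F0
          simp only [predsF, List.nil_append, predsF_closeF] at hu
          have hsz : sizeT (openT 0 (.fvar x) B) ≤ n := by
            rw [sizeT_open]
            simp only [sizeT] at hA
            omega
          have h1 := (ih _ hsz).1 _ _ _ hF hu
          rcases tvT_open h1 with h2 | h2
          · exact List.mem_append.2 (Or.inr h2)
          · simp [tvO] at h2
      | pi_nonrigid x hgs hxA hxB hxM hnrig hFA hF =>
          rename_i A0 B FA F0
          have hu' : u ∈ predsF (.imp FA F0) := by
            simpa only [predsF, predsF_closeF] using hu
          simp only [predsF, List.mem_append] at hu'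
          have hszA : sizeT A0 ≤ n := by simp only [sizeT] at hA; omega
          have hsz : sizeT (openT 0 (.fvar x) B) ≤ n := by
            rw [sizeT_open]
            simp only [sizeT] at hA
            omega
          rcases hu' with hu' | hu'
          · exact List.mem_append.2 (Or.inl ((ih _ hszA).2 _ _ hFA hu'))
          · have h1 := (ih _ hsz).1 _ _ _ hF hu'
            rcases tvT_open h1 with h2 | h2
            · exact List.mem_append.2 (Or.inr h2)
            · simp [tvO] at h2
    · intro M F h u hu
      cases h with
      | base hb =>
          simp only [predsF, List.mem_singleton] at hu
          subst hu
          exact headT_mem_tvT hb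
      | pi x hxA hxB hxM hFA hF =>
          rename_i A0 B FA F0
          have hu' : u ∈ predsF (.imp FA F0) := by
            simpa only [predsF, predsF_closeF] using hu
          simp only [predsF, List.mem_append] at hu'
          have hszA : sizeT A0 ≤ n := by simp only [sizeT] at hA; omega
          have hsz : sizeT (openT 0 (.fvar x) B) ≤ n := by
            rw [sizeT_open]
            simp only [sizeT] at hA
            omega
          rcases hu' with hu' | hu'
          · exact List.mem_append.2 (Or.inl ((ih _ hszA).1 _ _ _ hFA hu'))
          · have h1 := (ih _ hsz).2 _ _ hF hu'
            rcases tvT_open h1 with h2 | h2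
            · exact List.mem_append.2 (Or.inr h2)
            · simp [tvO] at h2

theorem optN_preds {A : LFType} {gs M F} (h : OptN gs A M F) {u : ℕ}
    (hu : u ∈ predsF F) : u ∈ tvT A :=
  (opt_preds (sizeT A) A le_rfl).1 _ _ _ h hu

theorem optP_preds {A : LFType} {M F} (h : OptP A M F) {u : ℕ}
    (hu : u ∈ predsF F) : u ∈ tvT A :=
  (opt_preds (sizeT A) A le_rfl).2 _ _ h hu

/-! ### the collapse relation between simple and optimized formulas -/

mutual
  /-- goal collapse: simple-side goal vs optimized-side goal. -/
  inductive GRel : HForm → HForm → Prop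
    | atom (u : ℕ) (m : HTerm) (args : List HTerm) :
        GRel (.hastype m (mkSpine u args)) (.papp u (m :: args))
    | imp {d d' g g'} : DRel d d' → GRel g g' → GRel (.imp d g) (.imp d' g')
    | all (τ : STy) {g g'} : GRel g g' → GRel (.all τ g) (.all τ g')
  /-- clause collapse: simple-side clause vs optimized-side clause,
  possibly eliding bodies. -/
  inductive DRel : HForm → HForm → Prop
    | atom (u : ℕ) (m : HTerm) (args : List HTerm) :
        DRel (.hastype m (mkSpine u args)) (.papp u (m :: args))
    | imp {g g' d d'} : GRel g g' → DRel d d' → DRel (.imp g d) (.imp g' d')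
    | imp_top (g : HForm) {d d'} : DRel d d' → DRel (.imp g d) (.imp .top d')
    | all (τ : STy) {d d'} : DRel d d' → DRel (.all τ d) (.all τ d')
end

theorem GRel_atom_iff {a X : HForm} (h : GRel a X) (ha : IsAtom a) :
    ∃ u m args, a = .hastype m (mkSpine u args) ∧ X = .papp u (m :: args) := by
  cases h with
  | atom u m args => exact ⟨u, m, args, rfl, rfl⟩
  | imp _ _ => exact absurd ha (by simp [IsAtom])
  | all _ _ => exact absurd ha (by simp [IsAtom])

theorem DRel_atom_iff {a X : HForm} (h : DRel a X) (ha : IsAtom a) :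
    ∃ u m args, a = .hastype m (mkSpine u args) ∧ X = .papp u (m :: args) := by
  cases h with
  | atom u m args => exact ⟨u, m, args, rfl, rfl⟩
  | imp _ _ => exact absurd ha (by simp [IsAtom])
  | imp_top _ _ => exact absurd ha (by simp [IsAtom])
  | all _ _ => exact absurd ha (by simp [IsAtom])

theorem GRel_DRel_unique {a X Y : HForm} (h1 : GRel a X) (h2 : DRel a Y)
    (ha : IsAtom a) : X = Y := by
  obtain ⟨u, m, args, rfl, rfl⟩ := GRel_atom_iff h1 ha
  obtain ⟨v, m', bs, he, rfl⟩ := DRel_atom_iff h2 ha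
  injection he with h1 h2
  obtain ⟨rfl, rfl⟩ := mkSpine_inj h2
  rw [h1]

theorem GRel_IsAtom {a X : HForm} (h : GRel a X) (ha : IsAtom a) : IsAtom X := by
  obtain ⟨u, m, args, rfl, rfl⟩ := GRel_atom_iff h ha
  simp [IsAtom]

/-- substitution stability of the collapse relations. -/
theorem GRel_DRel_subst : ∀ n : ℕ,
    (∀ g g', sizeOf g ≤ n → GRel g g' → ∀ k t, GRel (substF k t g) (substF k t g')) ∧
    (∀ d d', sizeOf d ≤ n → DRel d d' → ∀ k t, DRel (substF k t d) (substF k t d')) := by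
  intro n
  induction n with
  | zero =>
      constructor
      · intro g g' hs
        exfalso
        cases g <;> simp at hs
      · intro g g' hs
        exfalso
        cases g <;> simp at hs
  | succ n ih =>
    constructor
    · intro g g' hs h k t
      cases h with
      | atom u m args =>
          simp only [substF, hsubst_mkSpine, List.map_cons]
          exact GRel.atom u _ _
      | imp hd hg =>
          rename_i d d' g0 g0'
          have h1 : sizeOf d ≤ n := by simp at hs; omega
          have h2 : sizeOf g0 ≤ n := by simp at hs; omega
          exact GRel.imp (ih.2 _ _ h1 hd k t) (ih.1 _ _ h2 hg k t)
      | all τ hg =>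
          rename_i g0 g0'
          have h2 : sizeOf g0 ≤ n := by simp at hs; omega
          exact GRel.all τ (ih.1 _ _ h2 hg (k+1) t)
    · intro d d' hs h k t
      cases h with
      | atom u m args =>
          simp only [substF, hsubst_mkSpine, List.map_cons]
          exact DRel.atom u _ _
      | imp hg hd =>
          rename_i g g' d0 d0'
          have h1 : sizeOf g ≤ n := by simp at hs; omega
          have h2 : sizeOf d0 ≤ n := by simp at hs; omega
          exact DRel.imp (ih.1 _ _ h1 hg k t) (ih.2 _ _ h2 hd k t)
      | imp_top g hd =>
          rename_i d0 d0'
          have h2 : sizeOf d0 ≤ n := by simp at hs; omega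
          exact DRel.imp_top _ (ih.2 _ _ h2 hd k t)
      | all τ hd =>
          rename_i d0 d0'
          have h2 : sizeOf d0 ≤ n := by simp at hs; omega
          exact DRel.all τ (ih.2 _ _ h2 hd (k+1) t)

theorem GRel_subst {g g'} (h : GRel g g') (k : ℕ) (t : HTerm) :
    GRel (substF k t g) (substF k t g') :=
  (GRel_DRel_subst (sizeOf g)).1 _ _ le_rfl h k t

theorem DRel_subst {d d'} (h : DRel d d') (k : ℕ) (t : HTerm) :
    DRel (substF k t d) (substF k t d') :=
  (GRel_DRel_subst (sizeOf d)).2 _ _ le_rfl h k t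

/-- closing stability of the collapse relations, for a name that is not
a predicate head on the optimized side. -/
theorem GRel_DRel_close : ∀ n : ℕ,
    (∀ g g', sizeOf g ≤ n → GRel g g' → ∀ k x, x ∉ predsF g' →
      GRel (closeF k x g) (closeF k x g')) ∧
    (∀ d d', sizeOf d ≤ n → DRel d d' → ∀ k x, x ∉ predsF d' →
      DRel (closeF k x d) (closeF k x d')) := by
  intro n
  induction n with
  | zero =>
      constructor
      · intro g g' hs
        exfalso
        cases g <;> simp at hs
      · intro g g' hs
        exfalso
        cases g <;> simp at hs
  | succ n ih =>
    constructor
    · intro g g' hs h k x hx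
      cases h with
      | atom u m args =>
          have hux : u ≠ x := by
            simp only [predsF, List.mem_singleton] at hx
            exact Ne.symm hx
          simp only [closeF, List.map_cons]
          rw [closeT_mkSpine _ _ _ hux]
          exact GRel.atom u _ _
      | imp hd hg =>
          rename_i d d' g0 g0'
          simp only [predsF, List.mem_append, not_or] at hx
          have h1 : sizeOf d ≤ n := by simp at hs; omega
          have h2 : sizeOf g0 ≤ n := by simp at hs; omega
          exact GRel.imp (ih.2 _ _ h1 hd k x hx.1) (ih.1 _ _ h2 hg k x hx.2)
      | all τ hg =>
          rename_i g0 g0'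
          have h2 : sizeOf g0 ≤ n := by simp at hs; omega
          exact GRel.all τ (ih.1 _ _ h2 hg (k+1) x hx)
    · intro d d' hs h k x hx
      cases h with
      | atom u m args =>
          have hux : u ≠ x := by
            simp only [predsF, List.mem_singleton] at hx
            exact Ne.symm hx
          simp only [closeF, List.map_cons]
          rw [closeT_mkSpine _ _ _ hux]
          exact DRel.atom u _ _
      | imp hg hd =>
          rename_i g g' d0 d0'
          simp only [predsF, List.mem_append, not_or] at hx
          have h1 : sizeOf g ≤ n := by simp at hs; omega
          have h2 : sizeOf d0 ≤ n := by simp at hs; omega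
          exact DRel.imp (ih.1 _ _ h1 hg k x hx.1) (ih.2 _ _ h2 hd k x hx.2)
      | imp_top g hd =>
          rename_i d0 d0'
          simp only [predsF, List.mem_append, not_or] at hx
          have h2 : sizeOf d0 ≤ n := by simp at hs; omega
          exact DRel.imp_top _ (ih.2 _ _ h2 hd k x hx.2)
      | all τ hd =>
          rename_i d0 d0'
          have h2 : sizeOf d0 ≤ n := by simp at hs; omega
          exact DRel.all τ (ih.2 _ _ h2 hd (k+1) x hx)

theorem GRel_close {g g'} (h : GRel g g') (k x : ℕ) (hx : x ∉ predsF g') :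
    GRel (closeF k x g) (closeF k x g') :=
  (GRel_DRel_close (sizeOf g)).1 _ _ le_rfl h k x hx

theorem DRel_close {d d'} (h : DRel d d') (k x : ℕ) (hx : x ∉ predsF d') :
    DRel (closeF k x d) (closeF k x d') :=
  (GRel_DRel_close (sizeOf d)).2 _ _ le_rfl h k x hx

/-! ### the collapse relation holds between the two translations -/

theorem opt_collapse : ∀ (n : ℕ) (A : LFType), sizeT A ≤ n →
    ((∀ M F F', SimpleT A M F → OptP A M F' → GRel F F') ∧
     (∀ gs M F F', SimpleT A M F → OptN gs A M F' → DRel F F')) := by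
  intro n
  induction n with
  | zero =>
      intro A hA
      exfalso
      cases A <;> simp [sizeT] at hA
  | succ n ih =>
    intro A hA
    constructor
    · intro M F F' hF hF'
      cases hF' with
      | base hb =>
          cases hF with
          | base hb2 =>
              rw [encT_spine hb2]
              exact GRel.atom _ _ _
          | pi x hxA hxB hxM hFA hFB => simp [IsBaseT] at hb
      | pi x' hx'A hx'B hx'M hFA' hF'0 =>
          rename_i A0 B FA' F'0
          cases hF with
          | base hb2 => simp [IsBaseT] at hb2
          | pi x hxA hxB hxM hFA hFB =>
              rename_i FA FB
              obtain ⟨FA2, FB2, hFA2, hFB2, heq⟩ :=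
                simple_pi_rename x x' hxA hxB hxM hx'A hx'B hx'M hFA hFB
              rw [heq]
              have hszA : sizeT A0 ≤ n := by simp only [sizeT] at hA; omega
              have hszB : sizeT (openT 0 (.fvar x') B) ≤ n := by
                rw [sizeT_open]; simp only [sizeT] at hA; omega
              have hd : DRel FA2 FA' := (ih A0 hszA).2 _ _ _ _ hFA2 hFA'
              have hg : GRel FB2 F'0 := (ih _ hszB).1 _ _ _ hFB2 hF'0
              have hx'pA : x' ∉ predsF FA' := fun h =>
                hx'A (tvT_sub_namesT (optN_preds hFA' h))
              have hx'pB : x' ∉ predsF F'0 := by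
                intro h
                rcases tvT_open (optP_preds hF'0 h) with h1 | h1
                · exact hx'B (tvT_sub_namesT h1)
                · simp [tvO] at h1
              show GRel (.all (phiT A0) (.imp (closeF 0 x' FA2) (closeF 0 x' FB2)))
                (.all (phiT A0) (.imp (closeF 0 x' FA') (closeF 0 x' F'0)))
              exact GRel.all _ (GRel.imp (DRel_close hd 0 x' hx'pA)
                (GRel_close hg 0 x' hx'pB))
    · intro gs M F F' hF hF'
      cases hF' with
      | base hb =>
          cases hF with
          | base hb2 =>
              rw [encT_spine hb2]
              exact DRel.atom _ _ _
          | pi x hxA hxB hxM hFA hFB => simp [IsBaseT] at hb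
      | pi_rigid x' hgs hx'A hx'B hx'M hrig hF'0 =>
          rename_i A0 B F'0
          cases hF with
          | base hb2 => simp [IsBaseT] at hb2
          | pi x hxA hxB hxM hFA hFB =>
              rename_i FA FB
              obtain ⟨FA2, FB2, hFA2, hFB2, heq⟩ :=
                simple_pi_rename x x' hxA hxB hxM hx'A hx'B hx'M hFA hFB
              rw [heq]
              have hszB : sizeT (openT 0 (.fvar x') B) ≤ n := by
                rw [sizeT_open]; simp only [sizeT] at hA; omega
              have hd : DRel FB2 F'0 := (ih _ hszB).2 _ _ _ _ hFB2 hF'0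
              have hx'pB : x' ∉ predsF F'0 := by
                intro h
                rcases tvT_open (optN_preds hF'0 h) with h1 | h1
                · exact hx'B (tvT_sub_namesT h1)
                · simp [tvO] at h1
              show DRel (.all (phiT A0) (.imp (closeF 0 x' FA2) (closeF 0 x' FB2)))
                (.all (phiT A0) (.imp .top (closeF 0 x' F'0)))
              exact DRel.all _ (DRel.imp_top _ (DRel_close hd 0 x' hx'pB))
      | pi_nonrigid x' hgs hx'A hx'B hx'M hnrig hFA' hF'0 =>
          rename_i A0 B FA' F'0
          cases hF with
          | base hb2 => simp [IsBaseT] at hb2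
          | pi x hxA hxB hxM hFA hFB =>
              rename_i FA FB
              obtain ⟨FA2, FB2, hFA2, hFB2, heq⟩ :=
                simple_pi_rename x x' hxA hxB hxM hx'A hx'B hx'M hFA hFB
              rw [heq]
              have hszA : sizeT A0 ≤ n := by simp only [sizeT] at hA; omega
              have hszB : sizeT (openT 0 (.fvar x') B) ≤ n := by
                rw [sizeT_open]; simp only [sizeT] at hA; omega
              have hg : GRel FA2 FA' := (ih A0 hszA).1 _ _ _ hFA2 hFA'
              have hd : DRel FB2 F'0 := (ih _ hszB).2 _ _ _ _ hFB2 hF'0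
              have hx'pA : x' ∉ predsF FA' := fun h =>
                hx'A (tvT_sub_namesT (optP_preds hFA' h))
              have hx'pB : x' ∉ predsF F'0 := by
                intro h
                rcases tvT_open (optN_preds hF'0 h) with h1 | h1
                · exact hx'B (tvT_sub_namesT h1)
                · simp [tvO] at h1
              show DRel (.all (phiT A0) (.imp (closeF 0 x' FA2) (closeF 0 x' FB2)))
                (.all (phiT A0) (.imp (closeF 0 x' FA') (closeF 0 x' F'0)))
              exact DRel.all _ (DRel.imp (GRel_close hg 0 x' hx'pA)
                (DRel_close hd 0 x' hx'pB))

theorem opt_collapse_P {A M F F'} (hF : SimpleT A M F) (hF' : OptP A M F') :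
    GRel F F' :=
  (opt_collapse (sizeT A) A le_rfl).1 _ _ _ hF hF'

theorem opt_collapse_N {A gs M F F'} (hF : SimpleT A M F) (hF' : OptN gs A M F') :
    DRel F F' :=
  (opt_collapse (sizeT A) A le_rfl).2 _ _ _ _ hF hF'

/-! ### simulation of derivations along the collapse relation -/

theorem sim : ∀ n : ℕ,
    (∀ Sg Γ g Γ' g', Seq n Sg Γ g → List.Forall₂ DRel Γ Γ' → GRel g g' →
      Seq n Sg Γ' g') ∧
    (∀ Sg Γ a d Γ' X d', Focus n Sg Γ a d → List.Forall₂ DRel Γ Γ' → GRel a X →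
      IsAtom a → DRel d d' → Focus n Sg Γ' X d') := by
  intro n
  induction n with
  | zero =>
      constructor
      · intro Sg Γ g Γ' g' h hΓ hg
        cases h
        cases hg
      · intro Sg Γ a d Γ' X d' h hΓ ha hat hd
        cases h with
        | init hAt =>
            have he := GRel_DRel_unique ha hd hat
            subst he
            exact Focus.init (GRel_IsAtom ha hat)
  | succ m ihm =>
    obtain ⟨ihS, ihF⟩ := ihm
    constructor
    · intro Sg Γ g Γ' g' h hΓ hg
      cases h with
      | top => cases hg
      | impR h0 =>
          cases hg with
          | imp hd hg0 =>
              exact Seq.impR (ihS _ _ _ _ _ h0 (List.Forall₂.cons hd hΓ) hg0)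
      | allR c hc h0 =>
          cases hg with
          | all τ hg0 =>
              exact Seq.allR c hc (ihS _ _ _ _ _ h0 hΓ (GRel_subst hg0 0 (.con c)))
      | decide hmem hat hfoc =>
          obtain ⟨d', hd', hDd⟩ := forall₂_mem hΓ hmem
          exact Seq.decide hd' (GRel_IsAtom hg hat)
            (ihF _ _ _ _ _ _ _ hfoc hΓ hg hat hDd)
    · intro Sg Γ a d Γ' X d' h hΓ ha hat hd
      cases h with
      | init hAt =>
          have he := GRel_DRel_unique ha hd hat
          subst he
          exact Focus.init (GRel_IsAtom ha hat)
      | allL t hwt hfoc =>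
          cases hd with
          | all τ hd0 =>
              exact Focus.allL t hwt
                (ihF _ _ _ _ _ _ _ hfoc hΓ ha hat (DRel_subst hd0 0 t))
      | impL hseq hfoc =>
          cases hd with
          | imp hg0 hd0 =>
              exact Focus.impL (ihS _ _ _ _ _ hseq hΓ hg0)
                (ihF _ _ _ _ _ _ _ hfoc hΓ ha hat hd0)
          | imp_top g0 hd0 =>
              exact Focus.impL Seq.top (ihF _ _ _ _ _ _ _ hfoc hΓ ha hat hd0)

theorem ctx_collapse : ∀ {Γ Ds}, SimpleCtx Γ Ds → ∀ Ds', OptCtx Γ Ds' →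
    List.Forall₂ DRel Ds Ds' := by
  intro Γ Ds h
  induction h with
  | nil =>
      intro Ds' h'
      cases h'
      exact List.Forall₂.nil
  | kind h0 ih =>
      intro Ds' h'
      cases h' with
      | kind h1 => exact ih _ h1
  | type hS h0 ih =>
      intro Ds' h'
      cases h' with
      | type hN h1 => exact List.Forall₂.cons (opt_collapse_N hS hN) (ih _ h1)

end Aux17

/-- completeness of the optimized translation relative to the
simple one, for contexts and types in normal form that are not necessarily
well-formed. -/
theorem optimized_complete_wrt_simple (Γ : Ctx) (A : LFType)
    (hΓn : NormCtxP Γ) (hAn : NormT A)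
    (M : HTerm) (Ds Ds' : List HForm) (F F' : HForm)
    (hDs : SimpleCtx Γ Ds) (hF : SimpleT A M F)
    (hDs' : OptCtx Γ Ds') (hF' : OptP A M F')
    (h : SeqD (sigOf Γ) Ds F) :
    SeqD (sigOf Γ) Ds' F' := by
  obtain ⟨n, hn⟩ := h
  exact ⟨n, (sim n).1 _ _ _ _ _ hn (ctx_collapse hDs _ hDs') (opt_collapse_P hF hF')⟩

end LFHH
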